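/- PDC deterministic second half reduces the expected number of rejections: with A = X^{(I)}, B = X_I a single discrete coordinate, and E an event such that for each a ∈ E^{(I)} there is a unique y_I(a) with (a, y_I(a)) ∈ E, the acceptance probability of the PDC algorithm, P(X^{(I)} ∈ E^{(I)} and U < P(X_I = y_I(X^{(I)})) / max_ℓ P(X_I = ℓ)), equals P((A,B) ∈ E) / max_ℓ P(X_I = ℓ), and hence is at least as large as the hard-rejection acceptance probability P((A,B) ∈ E), with the ratio equal to 1 / max_ℓ P(X_I = ℓ) ≥ 1. -/

import Mathlib

open MeasureTheory ProbabilityTheory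

/-- **PDC deterministic second half reduces the expected number of rejections.**
`A = X^{(I)}` and `Z = X_I` are independent, `Z` discrete; `E'` is the projection of `E` onto
the first coordinate and, for every `a ∈ E'`, `y a` is the unique completion with
`(a, y a) ∈ E`.  With `U` uniform on `[0,1]` independent of `A`, and
`M = max_ℓ P(Z = ℓ)`, the PDC acceptance probability
`P(A ∈ E' and U < P(Z = y(A))/M)` equals `P((A,Z) ∈ E) / M`; hence it is at least the
hard-rejection acceptance probability `P((A,Z) ∈ E)` (the ratio being `1/M ≥ 1`). -/
theorem pdc_dsh_acceptance
    {Ω α β : Type*} [MeasurableSpace Ω] [MeasurableSpace α] [MeasurableSpace β]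
    [Countable α] [MeasurableSingletonClass α]
    [Countable β] [MeasurableSingletonClass β]
    (μ : Measure Ω) [IsProbabilityMeasure μ]
    (A : Ω → α) (Z : Ω → β) (U : Ω → ℝ)
    (hA : Measurable A) (hZ : Measurable Z) (hU : Measurable U)
    (hAZ : IndepFun A Z μ)
    (hUindep : IndepFun A U μ)
    (hUunif : μ.map U = MeasureTheory.volume.restrict (Set.Icc (0 : ℝ) 1))
    (E : Set (α × β))
    (y : α → β)
    (hy : ∀ a ∈ {a | ∃ b, (a, b) ∈ E}, (a, y a) ∈ E)
    (huniq : ∀ a ∈ {a | ∃ b, (a, b) ∈ E}, ∀ b, (a, b) ∈ E → b = y a)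
    (M : ENNReal) (hM : M = ⨆ ℓ : β, μ {ω | Z ω = ℓ}) :
    μ {ω | A ω ∈ {a | ∃ b, (a, b) ∈ E} ∧
        ENNReal.ofReal (U ω) < μ {ω' | Z ω' = y (A ω)} / M}
      = μ {ω | (A ω, Z ω) ∈ E} / M
    ∧ μ {ω | (A ω, Z ω) ∈ E}
        ≤ μ {ω | A ω ∈ {a | ∃ b, (a, b) ∈ E} ∧
            ENNReal.ofReal (U ω) < μ {ω' | Z ω' = y (A ω)} / M} := by
  classical
  set E' : Set α := {a | ∃ b, (a, b) ∈ E} with hE'def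
  -- basic facts about M
  have hM1 : M ≤ 1 := by
    rw [hM]; exact iSup_le fun ℓ => prob_le_one
  have hMtop : M ≠ ⊤ := (hM1.trans_lt ENNReal.one_lt_top).ne
  have hM0 : M ≠ 0 := by
    intro h0
    have hz : ∀ ℓ : β, μ {ω | Z ω = ℓ} = 0 := fun ℓ =>
      le_antisymm (h0 ▸ hM ▸ le_iSup (fun ℓ => μ {ω | Z ω = ℓ}) ℓ) zero_le
    have hcover : (Set.univ : Set Ω) = ⋃ ℓ : β, {ω | Z ω = ℓ} := by
      ext ω; simp
    have : (1 : ENNReal) ≤ 0 := by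
      calc (1 : ENNReal) = μ Set.univ := measure_univ.symm
        _ = μ (⋃ ℓ : β, {ω | Z ω = ℓ}) := by rw [hcover]
        _ ≤ ∑' ℓ : β, μ {ω | Z ω = ℓ} := measure_iUnion_le _
        _ = 0 := by simp [hz]
    simp at this
  have hpM : ∀ a : α, μ {ω' | Z ω' = y a} / M ≤ 1 := by
    intro a
    apply ENNReal.div_le_of_le_mul
    rw [one_mul, hM]
    exact le_iSup (fun ℓ => μ {ω | Z ω = ℓ}) (y a)
  -- uniform fact
  have hUc : ∀ c : ENNReal, c ≤ 1 → μ (U ⁻¹' {x | ENNReal.ofReal x < c}) = c := by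
    intro c hc
    have hctop : c ≠ ⊤ := (hc.trans_lt ENNReal.one_lt_top).ne
    have hms : MeasurableSet {x : ℝ | ENNReal.ofReal x < c} :=
      measurableSet_lt ENNReal.measurable_ofReal measurable_const
    rw [← Measure.map_apply hU hms, hUunif, Measure.restrict_apply hms]
    rcases eq_or_ne c 0 with rfl | hc0
    · have : {x : ℝ | ENNReal.ofReal x < 0} = ∅ := by ext x; simp
      rw [this]; simp
    · have ht0 : 0 < c.toReal := ENNReal.toReal_pos hc0 hctop
      have ht1 : c.toReal ≤ 1 := by
        rw [← ENNReal.toReal_one]; exact ENNReal.toReal_mono ENNReal.one_ne_top hc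
      have hseteq : {x : ℝ | ENNReal.ofReal x < c} ∩ Set.Icc 0 1 = Set.Ico 0 c.toReal := by
        ext x
        simp only [Set.mem_inter_iff, Set.mem_setOf_eq, Set.mem_Icc, Set.mem_Ico]
        constructor
        · rintro ⟨h1, h2, h3⟩
          exact ⟨h2, (ENNReal.ofReal_lt_iff_lt_toReal h2 hctop).1 h1⟩
        · rintro ⟨h1, h2⟩
          exact ⟨(ENNReal.ofReal_lt_iff_lt_toReal h1 hctop).2 h2, h1, h2.le.trans ht1⟩
      rw [hseteq, Real.volume_Ico, sub_zero, ENNReal.ofReal_toReal hctop]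
  -- per-a sets
  set T : α → Set ℝ := fun a => {x | a ∈ E' ∧ ENNReal.ofReal x < μ {ω' | Z ω' = y a} / M}
    with hTdef
  have hTmeas : ∀ a, MeasurableSet (T a) := by
    intro a
    by_cases h : a ∈ E'
    · have : T a = {x | ENNReal.ofReal x < μ {ω' | Z ω' = y a} / M} := by
        ext x; simp [hTdef, h]
      rw [this]
      exact measurableSet_lt ENNReal.measurable_ofReal measurable_const
    · have : T a = ∅ := by ext x; simp [hTdef, h]
      rw [this]; exact MeasurableSet.empty
  have hfiber : ∀ a : α, {b | (a, b) ∈ E} = if a ∈ E' then ({y a} : Set β) else ∅ := by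
    intro a
    by_cases h : a ∈ E'
    · rw [if_pos h]
      ext b
      simp only [Set.mem_setOf_eq, Set.mem_singleton_iff]
      exact ⟨fun hb => huniq a h b hb, fun hb => hb ▸ hy a h⟩
    · rw [if_neg h]
      ext b
      simp only [Set.mem_setOf_eq, Set.mem_empty_iff_false, iff_false]
      exact fun hb => h ⟨b, hb⟩
  -- decompositions
  have hLset : {ω | A ω ∈ E' ∧ ENNReal.ofReal (U ω) < μ {ω' | Z ω' = y (A ω)} / M}
      = ⋃ a : α, (A ⁻¹' {a} ∩ U ⁻¹' T a) := by
    ext ω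
    simp only [Set.mem_setOf_eq, Set.mem_iUnion, Set.mem_inter_iff, Set.mem_preimage,
      Set.mem_singleton_iff, hTdef]
    constructor
    · rintro ⟨h1, h2⟩; exact ⟨A ω, rfl, h1, h2⟩
    · rintro ⟨a, rfl, h1, h2⟩; exact ⟨h1, h2⟩
  have hRset : {ω | (A ω, Z ω) ∈ E} = ⋃ a : α, (A ⁻¹' {a} ∩ Z ⁻¹' {b | (a, b) ∈ E}) := by
    ext ω
    simp only [Set.mem_setOf_eq, Set.mem_iUnion, Set.mem_inter_iff, Set.mem_preimage,
      Set.mem_singleton_iff]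
    constructor
    · intro h; exact ⟨A ω, rfl, h⟩
    · rintro ⟨a, rfl, h⟩; exact h
  have hdisj : ∀ (s : α → Set Ω),
      Pairwise (Function.onFun Disjoint fun a : α => A ⁻¹' {a} ∩ s a) := by
    intro s a b hab
    simp only [Function.onFun]
    rw [Set.disjoint_left]
    rintro ω ⟨ha, -⟩ ⟨hb, -⟩
    exact hab (ha.symm.trans hb)
  -- the key per-a identity
  have key : ∀ a : α,
      μ (A ⁻¹' {a} ∩ U ⁻¹' T a)
        = μ (A ⁻¹' {a} ∩ Z ⁻¹' {b | (a, b) ∈ E}) / M := by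
    intro a
    rw [hUindep.measure_inter_preimage_eq_mul _ _ (measurableSet_singleton a) (hTmeas a),
      hAZ.measure_inter_preimage_eq_mul _ _ (measurableSet_singleton a)
        ((Set.to_countable _).measurableSet)]
    by_cases h : a ∈ E'
    · have hT : T a = {x | ENNReal.ofReal x < μ {ω' | Z ω' = y a} / M} := by
        ext x; simp [hTdef, h]
      rw [hT, hUc _ (hpM a), hfiber a, if_pos h, mul_div_assoc]
      rfl
    · have hT : T a = ∅ := by ext x; simp [hTdef, h]
      rw [hT, hfiber a, if_neg h]
      simp
  -- assemble
  have hmeasL : ∀ a : α, MeasurableSet (A ⁻¹' {a} ∩ U ⁻¹' T a) := fun a =>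
    (hA (measurableSet_singleton a)).inter (hU (hTmeas a))
  have hmeasR : ∀ a : α, MeasurableSet (A ⁻¹' {a} ∩ Z ⁻¹' {b | (a, b) ∈ E}) := fun a =>
    (hA (measurableSet_singleton a)).inter (hZ ((Set.to_countable _).measurableSet))
  have hLR : μ {ω | A ω ∈ E' ∧ ENNReal.ofReal (U ω) < μ {ω' | Z ω' = y (A ω)} / M}
      = μ {ω | (A ω, Z ω) ∈ E} / M := by
    rw [hLset, hRset, measure_iUnion (hdisj _) hmeasL, measure_iUnion (hdisj _) hmeasR]
    calc ∑' a : α, μ (A ⁻¹' {a} ∩ U ⁻¹' T a)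
        = ∑' a : α, μ (A ⁻¹' {a} ∩ Z ⁻¹' {b | (a, b) ∈ E}) / M := tsum_congr key
      _ = ∑' a : α, μ (A ⁻¹' {a} ∩ Z ⁻¹' {b | (a, b) ∈ E}) * M⁻¹ := by
          simp_rw [div_eq_mul_inv]
      _ = (∑' a : α, μ (A ⁻¹' {a} ∩ Z ⁻¹' {b | (a, b) ∈ E})) * M⁻¹ := ENNReal.tsum_mul_right
      _ = (∑' a : α, μ (A ⁻¹' {a} ∩ Z ⁻¹' {b | (a, b) ∈ E})) / M := by rw [div_eq_mul_inv]
  refine ⟨hLR, ?_⟩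
  rw [hLR, div_eq_mul_inv]
  exact le_mul_of_one_le_right zero_le (ENNReal.one_le_inv.mpr hM1)
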